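/- arXiv:1201.4844 — 2 statements merged into one kernel-verified Lean document; each statement's English description precedes it below -/
import Mathlib

section
/- Let A be a unital C*-algebra satisfying: (1) there exists a constant v₀ > 0 such that every x ∈ A can be written as a linear combination x = ∑_{j=1}^n t_j p_j of projections p_j ∈ A with complex coefficients t_j satisfying ∑_{j=1}^n |t_j| ≤ v₀‖x‖; and (2) the set of positive combinations of projections of A is norm dense in the positive cone A₊. Then every positive invertible element of A is a positive combination of projections in A. -/
private def PCP {A : Type*} [Ring A] [StarRing A] [Algebra ℂ A] (y : A) : Prop :=
  ∃ (n : ℕ) (t : Fin n → ℝ) (p : Fin n → A), (∀ j, 0 < t j) ∧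
    (∀ j, p j = star (p j) ∧ p j * p j = p j) ∧ y = ∑ j, (t j : ℂ) • p j

private lemma PCP_zero {A : Type*} [Ring A] [StarRing A] [Algebra ℂ A] : PCP (0 : A) :=
  ⟨0, finZeroElim, finZeroElim, fun j => j.elim0, fun j => j.elim0, by simp⟩

private lemma PCP_single {A : Type*} [Ring A] [StarRing A] [Algebra ℂ A] {c : ℝ} (hc : 0 < c)
    {p : A} (hp : p = star p ∧ p * p = p) : PCP ((c : ℂ) • p) :=
  ⟨1, fun _ => c, fun _ => p, fun _ => hc, fun _ => hp, by simp⟩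

private lemma PCP_add {A : Type*} [Ring A] [StarRing A] [Algebra ℂ A] {y z : A}
    (hy : PCP y) (hz : PCP z) : PCP (y + z) := by
  obtain ⟨n, t, p, ht, hp, rfl⟩ := hy
  obtain ⟨m, s, q, hs, hq, rfl⟩ := hz
  refine ⟨n + m, Fin.append t s, Fin.append p q, ?_, ?_, ?_⟩
  · intro j
    refine Fin.addCases (fun i => ?_) (fun i => ?_) j <;>
      simp [Fin.append_left, Fin.append_right, ht _, hs _]
  · intro j
    refine Fin.addCases (fun i => ?_) (fun i => ?_) j
    · simp only [Fin.append_left]; exact hp i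
    · simp only [Fin.append_right]; exact hq i
  · rw [Fin.sum_univ_add]
    simp [Fin.append_left, Fin.append_right]

private lemma PCP_sum {A : Type*} [Ring A] [StarRing A] [Algebra ℂ A] {ι : Type*}
    (s : Finset ι) (f : ι → A) (h : ∀ i ∈ s, PCP (f i)) : PCP (∑ i ∈ s, f i) := by
  classical
  induction s using Finset.induction_on with
  | empty => simpa using PCP_zero
  | insert _ _ hi ih =>
    rw [Finset.sum_insert hi]
    exact PCP_add (h _ (Finset.mem_insert_self _ _))
      (ih fun i hmem => h i (Finset.mem_insert_of_mem hmem))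

/-- In a unital C*-algebra possessing a universal constant `v₀` (bounding the sum of the moduli
of coefficients in decompositions into linear combinations of projections) and in which positive
combinations of projections are norm dense in the positive cone, every positive invertible
element is a positive combination of projections. -/
theorem positive_invertible_is_positive_combination_of_v0_and_CP
    {A : Type*} [CStarAlgebra A] [PartialOrder A] [StarOrderedRing A]
    (h1 : ∃ v₀ : ℝ, 0 < v₀ ∧ ∀ x : A, ∃ (n : ℕ) (t : Fin n → ℂ) (p : Fin n → A),
      (∀ j, p j = star (p j) ∧ p j * p j = p j) ∧ x = ∑ j, t j • p j ∧
      ∑ j, ‖t j‖ ≤ v₀ * ‖x‖)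
    (h2 : ∀ a : A, 0 ≤ a → a ∈ closure {y : A |
      ∃ (n : ℕ) (t : Fin n → ℝ) (p : Fin n → A), (∀ j, 0 < t j) ∧
        (∀ j, p j = star (p j) ∧ p j * p j = p j) ∧ y = ∑ j, (t j : ℂ) • p j})
    (x : A) (hx : 0 ≤ x) (hx_inv : IsUnit x) :
    ∃ (n : ℕ) (t : Fin n → ℝ) (p : Fin n → A), (∀ j, 0 < t j) ∧
      (∀ j, p j = star (p j) ∧ p j * p j = p j) ∧ x = ∑ j, (t j : ℂ) • p j := by
  classical
  obtain ⟨v₀, hv₀, h1⟩ := h1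
  rcases subsingleton_or_nontrivial A with hA | hA
  · exact ⟨0, finZeroElim, finZeroElim, fun j => j.elim0, fun j => j.elim0,
      Subsingleton.elim _ _⟩
  -- obtain a positive lower bound c • 1 ≤ x
  have hsa : IsSelfAdjoint x := .of_nonneg hx
  obtain ⟨c, hc, hcx⟩ := (CFC.exists_pos_algebraMap_le_iff (a := x) hsa).mpr (by
    intro r hr
    have hnn : 0 ≤ r := spectrum_nonneg_of_nonneg hx hr
    have h0 : (0 : ℝ) ∉ spectrum ℝ x := spectrum.zero_notMem ℝ hx_inv
    exact hnn.lt_of_ne fun h => h0 (h ▸ hr))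
  -- 1-projections helper
  have hone : (1 : A) = star 1 ∧ (1 : A) * 1 = 1 := ⟨by simp, by simp⟩
  have hsmul : ∀ r : ℝ, algebraMap ℝ A r = (r : ℂ) • (1 : A) := by
    intro r
    rw [IsScalarTower.algebraMap_apply ℝ ℂ A, Algebra.algebraMap_eq_smul_one]
    rfl
  -- a := x - (c/2) • 1 is nonneg
  set a : A := x - ((c / 2 : ℝ) : ℂ) • 1 with ha_def
  have ha : 0 ≤ a := by
    rw [ha_def, sub_nonneg, ← hsmul]
    have hnn : 0 ≤ algebraMap ℝ A (c / 2) := by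
      have h := star_mul_self_nonneg (algebraMap ℝ A (Real.sqrt (c / 2)))
      rwa [((IsSelfAdjoint.all _).algebraMap A).star_eq, ← map_mul,
        Real.mul_self_sqrt (by linarith)] at h
    calc algebraMap ℝ A (c / 2) ≤ algebraMap ℝ A c := by
          rw [← sub_nonneg, ← map_sub]
          have : c - c / 2 = c / 2 := by ring
          rw [this]; exact hnn
      _ ≤ x := hcx
  -- approximate a by a positive combination y within c / (2 * v₀)
  have hcv : 0 < c / (2 * v₀) := by positivity
  obtain ⟨y, hyS, hdist⟩ := Metric.mem_closure_iff.mp (h2 a ha) _ hcv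
  set z : A := a - y with hz_def
  have hznorm : ‖z‖ < c / (2 * v₀) := by rwa [hz_def, ← dist_eq_norm]
  -- decompose z into projections
  obtain ⟨n, t, p, hp, hz, htle⟩ := h1 z
  set r : Fin n → ℝ := fun j => (t j).re with hr_def
  -- z is selfadjoint
  have hy_sa : star y = y := by
    obtain ⟨m, s, q, hs, hq, rfl⟩ := hyS
    rw [star_sum]
    refine Finset.sum_congr rfl fun j _ => ?_
    rw [star_smul, ← (hq j).1, Complex.star_def, Complex.conj_ofReal]
  have hz_sa : star z = z := by
    rw [hz_def, ha_def]
    simp [star_sub, star_smul, hsa.star_eq, hy_sa, Complex.conj_ofReal]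
  -- hence z = ∑ (r j) • p j
  have hz_real : z = ∑ j, ((r j : ℝ) : ℂ) • p j := by
    have h2z : (2 : ℂ) • z = (2 : ℂ) • ∑ j, ((r j : ℝ) : ℂ) • p j := by
      calc (2 : ℂ) • z = z + star z := by rw [hz_sa, two_smul]
        _ = ∑ j, (t j + starRingEnd ℂ (t j)) • p j := by
            rw [hz, star_sum]
            rw [← Finset.sum_add_distrib]
            refine Finset.sum_congr rfl fun j _ => ?_
            rw [star_smul, ← (hp j).1, add_smul, Complex.star_def]
        _ = (2 : ℂ) • ∑ j, ((r j : ℝ) : ℂ) • p j := by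
            rw [Finset.smul_sum]
            refine Finset.sum_congr rfl fun j _ => ?_
            rw [Complex.add_conj, smul_smul]
            norm_num [hr_def]
    exact smul_right_injective A (by norm_num : (2 : ℂ) ≠ 0) h2z
  -- coefficient bound
  have hrle : ∑ j, |r j| < c / 2 := by
    have h1' : ∑ j, |r j| ≤ ∑ j, ‖t j‖ :=
      Finset.sum_le_sum fun j _ => Complex.abs_re_le_norm (t j)
    have h2' : v₀ * ‖z‖ < v₀ * (c / (2 * v₀)) := by
      exact mul_lt_mul_of_pos_left hznorm hv₀
    have h3' : v₀ * (c / (2 * v₀)) = c / 2 := by field_simp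
    linarith
  set neg : Fin n → ℝ := fun j => max (-(r j)) 0 with hneg_def
  set Sneg : ℝ := ∑ j, neg j with hSneg_def
  have hSneg_lt : Sneg < c / 2 := by
    refine lt_of_le_of_lt (Finset.sum_le_sum fun j _ => ?_) hrle
    simp only [hneg_def]
    rw [max_le_iff]
    constructor
    · exact neg_le_abs (r j)
    · exact abs_nonneg (r j)
  set c₀ : ℝ := c / 2 - Sneg with hc₀_def
  have hc₀ : 0 < c₀ := by simp [hc₀_def]; linarith
  -- the pieces
  set f : Fin n → A := fun j =>
    if 0 ≤ r j then ((r j : ℝ) : ℂ) • p j else ((-(r j) : ℝ) : ℂ) • (1 - p j) with hf_def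
  have hf_eq : ∀ j, f j = ((r j : ℝ) : ℂ) • p j + ((neg j : ℝ) : ℂ) • (1 : A) := by
    intro j
    simp only [hf_def, hneg_def]
    split_ifs with h
    · rw [max_eq_right (by linarith)]
      simp
    · rw [max_eq_left (by linarith)]
      rw [smul_sub]
      push_cast
      rw [neg_smul, neg_smul]
      abel
  -- key identity
  have hx_eq : x = ((c₀ : ℝ) : ℂ) • 1 + y + ∑ j, f j := by
    have hsum : ∑ j, f j = z + ((Sneg : ℝ) : ℂ) • 1 := by
      rw [hz_real]
      calc ∑ j, f j = ∑ j, (((r j : ℝ) : ℂ) • p j + ((neg j : ℝ) : ℂ) • (1 : A)) :=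
            Finset.sum_congr rfl fun j _ => hf_eq j
        _ = (∑ j, ((r j : ℝ) : ℂ) • p j) + ∑ j, ((neg j : ℝ) : ℂ) • (1 : A) :=
            Finset.sum_add_distrib
        _ = (∑ j, ((r j : ℝ) : ℂ) • p j) + ((Sneg : ℝ) : ℂ) • 1 := by
            rw [← Finset.sum_smul, hSneg_def]
            push_cast
            rfl
    rw [hsum]
    have hz' : z = x - ((c / 2 : ℝ) : ℂ) • 1 - y := by rw [hz_def, ha_def]
    rw [hz']
    have : ((c₀ : ℝ) : ℂ) = ((c / 2 : ℝ) : ℂ) - ((Sneg : ℝ) : ℂ) := by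
      rw [hc₀_def]; push_cast; ring
    rw [this, sub_smul]
    abel
  -- conclude via PCP closure properties
  have : PCP x := by
    rw [hx_eq]
    refine PCP_add (PCP_add (PCP_single hc₀ ⟨hone.1, hone.2⟩) ?_) ?_
    · obtain ⟨m, s, q, hs, hq, hy⟩ := hyS
      exact ⟨m, s, q, hs, hq, hy⟩
    · refine PCP_sum _ _ fun j _ => ?_
      simp only [hf_def]
      split_ifs with h
      · rcases eq_or_lt_of_le h with h' | h'
        · rw [← h']; simpa using PCP_zero
        · exact PCP_single h' (hp j)
      · refine PCP_single (by linarith) ⟨?_, ?_⟩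
        · rw [star_sub, star_one, ← (hp j).1]
        · rw [sub_mul, mul_sub, mul_sub, (hp j).2]
          simp
  exact this
end

section
/- Let A be a C*-algebra containing two projections p, q with pq = 0 and q ≺ p (Murray–von Neumann subequivalence), such that for every projection r ∈ A with r ≤ p (i.e., rp = pr = r), every positive element a of the corner rAr (a = rar) that is invertible in rAr (there is c ∈ A with c = rcr and ac = ca = r) is a positive combination of projections belonging to rAr. Let t be a real number and b ∈ A an element with b = qb = bq and t > ‖b‖, and suppose x := t·p + b is a positive element of A. Then x is a positive combination of projections in A. -/
set_option linter.unusedSectionVars false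

section aux
variable {A : Type*} [NonUnitalCStarAlgebra A] [PartialOrder A] [StarOrderedRing A]


variable {A : Type*} [NonUnitalCStarAlgebra A] [PartialOrder A] [StarOrderedRing A]

/-- Absorption: a self-adjoint square root of an element of a corner lies in the corner. -/
lemma pcp_corner_absorb {c q b : A} (hqs : star q = q) (hc : star c = c) (hcc : c * c = b)
    (hqb : q * b = b) (hbq : b * q = b) : c * q = c ∧ q * c = c := by
  have key : c * q - c = 0 := by
    rw [← CStarRing.star_mul_self_eq_zero_iff]
    have h1 : star (c * q - c) = q * c - c := by rw [star_sub, star_mul, hc, hqs]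
    rw [h1]
    have : (q * c - c) * (c * q - c)
        = q * (c * c) * q - q * (c * c) - (c * c) * q + c * c := by noncomm_ring
    rw [this, hcc]
    rw [show q * b * q = b by rw [hqb, hbq], hqb, hbq]
    abel
  have h2 : c * q = c := by rwa [sub_eq_zero] at key
  refine ⟨h2, ?_⟩
  calc q * c = star (c * q) := by rw [star_mul, hc, hqs]
  _ = c := by rw [h2, hc]

/-- A partial isometry identity: if `v⋆v` is a projection then `v v⋆ v = v`. -/
lemma pcp_partial_isometry {v q : A} (hvv : star v * v = q) (hqq : q * q = q) :
    v * star v * v = v := by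
  have key : v * star v * v - v = 0 := by
    rw [← CStarRing.star_mul_self_eq_zero_iff]
    have h1 : star (v * star v * v - v) = star v * v * star v - star v := by
      simp [star_mul, mul_assoc]
    rw [h1]
    have : (star v * v * star v - star v) * (v * star v * v - v)
        = (star v * v) * (star v * v) * (star v * v) - (star v * v) * (star v * v)
          - (star v * v) * (star v * v) + star v * v := by noncomm_ring
    rw [this, hvv, hqq, hqq]
    abel
  rwa [sub_eq_zero] at key




set_option maxHeartbeats 1000000 in
/-- Corner inverse square root: given a projection `q`, `0 ≤ b` in the corner `qAq`, and
`t > 0`, there is a self-adjoint `k` in the corner commuting with `b` such that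
`k (t q + b) k = q` (stated as `t • k² + b k² = q`). -/
lemma pcp_corner_inv_sqrt {q b : A} (hqs : star q = q) (hqq : q * q = q) (hb : 0 ≤ b)
    (hqb : q * b = b) (hbq : b * q = b) {t : ℝ} (ht : 0 < t) :
    ∃ k : A, star k = k ∧ q * k = k ∧ k * q = k ∧ k * b = b * k ∧
      t • (k * k) + b * (k * k) = q := by
  have hb' : IsSelfAdjoint b := .of_nonneg hb
  set s : ℝ := (Real.sqrt t)⁻¹ with hs_def
  have hst : 0 < Real.sqrt t := Real.sqrt_pos.mpr ht
  have hs_pos : 0 < s := inv_pos.mpr hst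
  have hs2 : s * s = t⁻¹ := by
    rw [hs_def, ← mul_inv, Real.mul_self_sqrt ht.le]
  set α : ℝ := -(s / (2 * t)) with hα_def
  set β : ℝ := 3 * s / (8 * t ^ 2) with hβ_def
  set W : ℝ → ℝ := fun l => (Real.sqrt (t + l))⁻¹ with hW_def
  set P : ℝ → ℝ := fun l => s * (1 - l / (2 * t) + 3 * l ^ 2 / (8 * t ^ 2)) with hP_def
  set Rm : ℝ → ℝ := fun l => 5 / (8 * t ^ 2) - 15 / (64 * t ^ 3) * l + 9 / (64 * t ^ 4) * l ^ 2
    with hRm_def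
  set H : ℝ → ℝ := fun l => -Rm l / (t * (t + l) * (W l + P l)) with hH_def
  have hWpos : ∀ l : ℝ, 0 ≤ l → 0 < W l := by
    intro l hl
    rw [hW_def]
    exact inv_pos.mpr (Real.sqrt_pos.mpr (by linarith))
  have hPpos : ∀ l : ℝ, 0 ≤ l → 0 < P l := by
    intro l hl
    rw [hP_def]
    have h1 : (8 * t ^ 2 - 4 * t * l + 3 * l ^ 2) / (8 * t ^ 2)
        = 1 - l / (2 * t) + 3 * l ^ 2 / (8 * t ^ 2) := by
      field_simp
      ring
    refine mul_pos hs_pos ?_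
    rw [← h1]
    apply div_pos _ (by positivity)
    nlinarith [sq_nonneg (2 * t - l), sq_nonneg l]
  have hDpos : ∀ l : ℝ, 0 ≤ l → 0 < t * (t + l) * (W l + P l) := by
    intro l hl
    have := hWpos l hl
    have := hPpos l hl
    have : 0 < t + l := by linarith
    positivity
  -- key pointwise identities
  have hkey : ∀ l : ℝ, 0 ≤ l → P l + l ^ 3 * H l = W l ∧ (t + l) * (W l * W l) = 1 := by
    intro l hl
    have htl : 0 < t + l := by linarith
    have hW2 : W l * W l = (t + l)⁻¹ := by
      rw [hW_def, ← mul_inv, Real.mul_self_sqrt htl.le]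
    have h2 : (t + l) * (W l * W l) = 1 := by
      rw [hW2, mul_inv_cancel₀ htl.ne']
    refine ⟨?_, h2⟩
    have hD := hDpos l hl
    have hDne : t * (t + l) * (W l + P l) ≠ 0 := hD.ne'
    have e1 : (P l - W l) * (t * (t + l) * (W l + P l))
        = t * ((t + l) * (P l * P l)) - t * ((t + l) * (W l * W l)) := by ring
    rw [h2, mul_one] at e1
    have e2 : t * ((t + l) * (P l * P l)) - t = l ^ 3 * Rm l := by
      have hPP : P l * P l = (s * s) * (1 - l / (2 * t) + 3 * l ^ 2 / (8 * t ^ 2)) ^ 2 := by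
        rw [hP_def]; ring
      rw [hPP, hs2, hRm_def]
      field_simp
      ring
    have hpoly : (P l - W l) * (t * (t + l) * (W l + P l)) = l ^ 3 * Rm l := e1.trans e2
    have e3 : l ^ 3 * H l = W l - P l := by
      rw [hH_def]
      calc l ^ 3 * (-Rm l / (t * (t + l) * (W l + P l)))
          = -(l ^ 3 * Rm l) / (t * (t + l) * (W l + P l)) := by ring
        _ = -((P l - W l) * (t * (t + l) * (W l + P l))) / (t * (t + l) * (W l + P l)) := by
            rw [hpoly]
        _ = -(P l - W l) := by rw [neg_div, mul_div_assoc, div_self hDne, mul_one]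
        _ = W l - P l := by ring
    rw [e3]; ring
  -- the quasispectrum is nonnegative
  have hS : quasispectrum ℝ b ⊆ Set.Ici 0 := fun l hl =>
    quasispectrum_nonneg_of_nonneg b hb l hl
  -- continuity of H on the quasispectrum
  have hHcont : ContinuousOn H (quasispectrum ℝ b) := by
    apply ContinuousOn.mono _ hS
    rw [hH_def]
    apply ContinuousOn.div
    · apply Continuous.continuousOn
      rw [hRm_def]; fun_prop
    · apply ContinuousOn.mul
      · apply Continuous.continuousOn; fun_prop
      · apply ContinuousOn.add
        · rw [hW_def]
          apply ContinuousOn.inv₀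
          · exact (Real.continuous_sqrt.comp (continuous_const.add continuous_id)).continuousOn
          · intro l hl
            exact (Real.sqrt_pos.mpr (by simp at hl; linarith)).ne'
        · apply Continuous.continuousOn; rw [hP_def]; fun_prop
    · intro l hl
      exact (hDpos l hl).ne'
  -- the function F₁ = l * H l and its cfcₙ
  set F₁ : ℝ → ℝ := fun l => l * H l with hF₁_def
  have hF₁cont : ContinuousOn F₁ (quasispectrum ℝ b) := continuousOn_id.mul hHcont
  have hF₁0 : F₁ 0 = 0 := by rw [hF₁_def]; simp
  set z : A := cfcₙ F₁ b with hz_def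
  set Fu : ℝ → ℝ := fun l => α * l + (β * (l * l) + l * F₁ l * l) with hFu_def
  have hFucont : ContinuousOn Fu (quasispectrum ℝ b) := by
    rw [hFu_def]
    exact ((continuous_const.mul continuous_id).continuousOn).add
      ((((continuous_const.mul (continuous_id.mul continuous_id))).continuousOn).add
        ((continuousOn_id.mul hF₁cont).mul continuousOn_id))
  have hFu0 : Fu 0 = 0 := by rw [hFu_def]; simp
  -- identify cfcₙ Fu b with an explicit corner element
  have hc2 : cfcₙ (fun l : ℝ => l * l) b = b * b := by
    rw [cfcₙ_mul (fun l : ℝ => l) (fun l : ℝ => l) b continuousOn_id rfl continuousOn_id rfl,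
      cfcₙ_id' ℝ b]
  have hmulz : cfcₙ (fun l : ℝ => l * F₁ l) b = b * z := by
    rw [cfcₙ_mul (fun l : ℝ => l) F₁ b continuousOn_id rfl hF₁cont hF₁0, cfcₙ_id' ℝ b, hz_def]
  have hmulz2 : cfcₙ (fun l : ℝ => l * F₁ l * l) b = b * z * b := by
    rw [cfcₙ_mul (fun l : ℝ => l * F₁ l) (fun l : ℝ => l) b (continuousOn_id.mul hF₁cont)
      (by simp) continuousOn_id rfl, hmulz, cfcₙ_id' ℝ b]
  have hαb : cfcₙ (fun l : ℝ => α * l) b = α • b := cfcₙ_const_mul_id α b hb'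
  have hβbb : cfcₙ (fun l : ℝ => β * (l * l)) b = β • (b * b) := by
    rw [cfcₙ_const_mul β (fun l : ℝ => l * l) b (continuous_id.mul continuous_id).continuousOn
      (by simp), hc2]
  have hu : cfcₙ Fu b = α • b + (β • (b * b) + b * z * b) := by
    rw [hFu_def]
    rw [cfcₙ_add (fun l : ℝ => α * l) (fun l : ℝ => β * (l * l) + l * F₁ l * l) b
      ((continuous_const.mul continuous_id).continuousOn) (by simp)
      (((continuous_const.mul (continuous_id.mul continuous_id)).continuousOn).add
        ((continuousOn_id.mul hF₁cont).mul continuousOn_id)) (by simp)]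
    rw [cfcₙ_add (fun l : ℝ => β * (l * l)) (fun l : ℝ => l * F₁ l * l) b
      ((continuous_const.mul (continuous_id.mul continuous_id)).continuousOn) (by simp)
      ((continuousOn_id.mul hF₁cont).mul continuousOn_id) (by simp)]
    rw [hαb, hβbb, hmulz2]
  set u : A := α • b + (β • (b * b) + b * z * b) with hu_def
  have hu_eq : u = cfcₙ Fu b := by rw [hu_def, hu]
  have hqu : q * u = u := by
    rw [hu_def]
    simp only [mul_add, mul_smul_comm, ← mul_assoc, hqb]
  have huq : u * q = u := by
    rw [hu_def]
    simp only [add_mul, smul_mul_assoc, mul_assoc, hbq]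
  have hub : u * b = b * u := by
    rw [hu_eq]
    have h := cfcₙ_commute_cfcₙ Fu (fun l : ℝ => l) b
    rw [cfcₙ_id' ℝ b] at h
    exact h.eq
  have hustar : star u = u := by
    rw [hu_eq]
    exact (cfcₙ_predicate Fu b).star_eq
  clear_value u
  -- auxiliary continuity facts
  have hFF : ContinuousOn (fun l : ℝ => Fu l * Fu l) (quasispectrum ℝ b) := hFucont.mul hFucont
  have hFF0 : (fun l : ℝ => Fu l * Fu l) 0 = 0 := by simp [hFu0]
  have hbu' : ContinuousOn (fun l : ℝ => l * Fu l) (quasispectrum ℝ b) :=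
    continuousOn_id.mul hFucont
  have hbu'0 : (fun l : ℝ => l * Fu l) 0 = 0 := by simp
  have hbuu' : ContinuousOn (fun l : ℝ => l * (Fu l * Fu l)) (quasispectrum ℝ b) :=
    continuousOn_id.mul hFF
  have hbuu'0 : (fun l : ℝ => l * (Fu l * Fu l)) 0 = 0 := by simp
  -- cfcₙ representations of the pieces
  have e1 : (t * (2 * s)) • u = cfcₙ (fun l : ℝ => (t * (2 * s)) * Fu l) b := by
    rw [hu_eq, ← cfcₙ_const_mul (t * (2 * s)) Fu b hFucont hFu0]
  have eFF : u * u = cfcₙ (fun l : ℝ => Fu l * Fu l) b := by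
    rw [hu_eq, ← cfcₙ_mul Fu Fu b hFucont hFu0 hFucont hFu0]
  have e2 : t • (u * u) = cfcₙ (fun l : ℝ => t * (Fu l * Fu l)) b := by
    rw [eFF, ← cfcₙ_const_mul t (fun l : ℝ => Fu l * Fu l) b hFF hFF0]
  have e3 : (s * s) • b = cfcₙ (fun l : ℝ => (s * s) * l) b :=
    (cfcₙ_const_mul_id (s * s) b hb').symm
  have ebu : b * u = cfcₙ (fun l : ℝ => l * Fu l) b := by
    have h := cfcₙ_mul (fun l : ℝ => l) Fu b continuousOn_id rfl hFucont hFu0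
    rw [cfcₙ_id' ℝ b] at h
    rw [hu_eq]
    exact h.symm
  have e4 : (2 * s) • (b * u) = cfcₙ (fun l : ℝ => (2 * s) * (l * Fu l)) b := by
    rw [ebu, ← cfcₙ_const_mul (2 * s) (fun l : ℝ => l * Fu l) b hbu' hbu'0]
  have e5 : b * (u * u) = cfcₙ (fun l : ℝ => l * (Fu l * Fu l)) b := by
    have h := cfcₙ_mul (fun l : ℝ => l) (fun l : ℝ => Fu l * Fu l) b continuousOn_id rfl hFF hFF0
    rw [cfcₙ_id' ℝ b] at h
    rw [eFF]
    exact h.symm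
  -- the total function vanishes on the quasispectrum
  have hsum : cfcₙ (fun l : ℝ => (t * (2 * s)) * Fu l + (t * (Fu l * Fu l) + ((s * s) * l
        + ((2 * s) * (l * Fu l) + l * (Fu l * Fu l))))) b
      = (t * (2 * s)) • u + (t • (u * u) + ((s * s) • b
        + ((2 * s) • (b * u) + b * (u * u)))) := by
    rw [cfcₙ_add (fun l : ℝ => (t * (2 * s)) * Fu l)
      (fun l : ℝ => t * (Fu l * Fu l) + ((s * s) * l
        + ((2 * s) * (l * Fu l) + l * (Fu l * Fu l)))) b
      (continuousOn_const.mul hFucont) (by simp [hFu0])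
      (((continuousOn_const.mul hFF).add ((continuousOn_const.mul continuousOn_id).add
        ((continuousOn_const.mul hbu').add hbuu')))) (by simp [hFu0])]
    rw [cfcₙ_add (fun l : ℝ => t * (Fu l * Fu l))
      (fun l : ℝ => (s * s) * l + ((2 * s) * (l * Fu l) + l * (Fu l * Fu l))) b
      (continuousOn_const.mul hFF) (by simp [hFu0])
      ((continuousOn_const.mul continuousOn_id).add
        ((continuousOn_const.mul hbu').add hbuu')) (by simp)]
    rw [cfcₙ_add (fun l : ℝ => (s * s) * l)
      (fun l : ℝ => (2 * s) * (l * Fu l) + l * (Fu l * Fu l)) b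
      (continuousOn_const.mul continuousOn_id) (by simp)
      ((continuousOn_const.mul hbu').add hbuu') (by simp)]
    rw [cfcₙ_add (fun l : ℝ => (2 * s) * (l * Fu l)) (fun l : ℝ => l * (Fu l * Fu l)) b
      (continuousOn_const.mul hbu') (by simp) hbuu' (by simp)]
    rw [← e1, ← e2, ← e3, ← e4, ← e5]
  have hzero : (t * (2 * s)) • u + (t • (u * u) + ((s * s) • b
      + ((2 * s) • (b * u) + b * (u * u)))) = 0 := by
    rw [← hsum]
    have hEq : (quasispectrum ℝ b).EqOn (fun l : ℝ => (t * (2 * s)) * Fu l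
        + (t * (Fu l * Fu l) + ((s * s) * l + ((2 * s) * (l * Fu l) + l * (Fu l * Fu l)))))
        (fun _ : ℝ => (0 : ℝ)) := by
      intro l hl
      have hl0 : (0 : ℝ) ≤ l := hS hl
      obtain ⟨hk1, hk2⟩ := hkey l hl0
      have hsf : s + Fu l = W l := by
        rw [← hk1]
        simp only [hFu_def, hF₁_def, hP_def, hα_def, hβ_def]
        ring
      show (t * (2 * s)) * Fu l + (t * (Fu l * Fu l) + ((s * s) * l
        + ((2 * s) * (l * Fu l) + l * (Fu l * Fu l)))) = 0
      have hring : (t * (2 * s)) * Fu l + (t * (Fu l * Fu l) + ((s * s) * l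
          + ((2 * s) * (l * Fu l) + l * (Fu l * Fu l))))
          = (t + l) * ((s + Fu l) * (s + Fu l)) - t * (s * s) := by ring
      rw [hring, hsf, hk2, hs2, mul_inv_cancel₀ ht.ne', sub_self]
    exact (cfcₙ_congr hEq).trans (by simp)
  -- assemble
  refine ⟨s • q + u, ?_, ?_, ?_, ?_, ?_⟩
  · rw [star_add, star_smul, star_trivial, hqs, hustar]
  · simp only [mul_add, mul_smul_comm, hqq, hqu]
  · simp only [add_mul, smul_mul_assoc, hqq, huq]
  · simp only [add_mul, mul_add, smul_mul_assoc, mul_smul_comm, hqb, hbq, hub]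
  · have h1 : t * (s * s) = 1 := by rw [hs2, mul_inv_cancel₀ ht.ne']
    have hkk : (s • q + u) * (s • q + u) = (s * s) • q + ((2 * s) • u + u * u) := by
      rw [add_mul, mul_add, mul_add, smul_mul_smul_comm, hqq, smul_mul_assoc, hqu,
        mul_smul_comm, huq, two_mul, add_smul]
      abel
    calc t • ((s • q + u) * (s • q + u)) + b * ((s • q + u) * (s • q + u))
        = q + ((t * (2 * s)) • u + (t • (u * u) + ((s * s) • b
          + ((2 * s) • (b * u) + b * (u * u))))) := by
          rw [hkk, smul_add, smul_add, mul_add, mul_add, smul_smul, smul_smul,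
            mul_smul_comm, mul_smul_comm, hbq, h1, one_smul]
          abel
      _ = q := by rw [hzero, add_zero]



end aux
set_option maxHeartbeats 2000000 in
/-- Key lemma: if `q ≺ p` are orthogonal projections in a C*-algebra such that positive
invertible elements of every corner `rAr` with `r ≤ p` are positive combinations of projections
in the corner, and `x = t·p + b` is positive with `b = qb = bq` and `t > ‖b‖`, then `x` is a
positive combination of projections. -/
theorem positive_combination_of_corner_decomposition
    {A : Type*} [NonUnitalCStarAlgebra A] [PartialOrder A] [StarOrderedRing A]
    (p q : A) (hp : p = star p ∧ p * p = p) (hq : q = star q ∧ q * q = q)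
    (hpq : p * q = 0)
    (hsub : ∃ q' : A, (q' = star q' ∧ q' * q' = q') ∧ (q' * p = q' ∧ p * q' = q') ∧
      ∃ v : A, star v * v = q ∧ v * star v = q')
    (hcorner : ∀ r : A, (r = star r ∧ r * r = r) → (r * p = r ∧ p * r = r) →
      ∀ a : A, 0 ≤ a → a = r * a * r →
        (∃ c : A, c = r * c * r ∧ a * c = r ∧ c * a = r) →
        ∃ (n : ℕ) (t : Fin n → ℝ) (e : Fin n → A), (∀ j, 0 < t j) ∧
          (∀ j, e j = star (e j) ∧ e j * e j = e j ∧ e j = r * e j * r) ∧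
          a = ∑ j, (t j : ℂ) • e j)
    (t : ℝ) (b : A) (hb : b = q * b ∧ b = b * q) (htb : ‖b‖ < t)
    (x : A) (hx_def : x = (t : ℂ) • p + b) (hx_pos : 0 ≤ x) :
    ∃ (n : ℕ) (c : Fin n → ℝ) (e : Fin n → A), (∀ j, 0 < c j) ∧
      (∀ j, e j = star (e j) ∧ e j * e j = e j) ∧ x = ∑ j, (c j : ℂ) • e j := by
  obtain ⟨hps, hpp⟩ := hp
  obtain ⟨hqs, hqq⟩ := hq
  obtain ⟨q', ⟨hq's, hq'q'⟩, ⟨hq'p, hpq'⟩, v, hvv, hvv'⟩ := hsub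
  obtain ⟨hbqb, hbbq⟩ := hb
  have ht : 0 < t := lt_of_le_of_lt (norm_nonneg b) htb
  have hqb : q * b = b := hbqb.symm
  have hbq : b * q = b := hbbq.symm
  have hqs' : star q = q := hqs.symm
  have hps' : star p = p := hps.symm
  have hq's' : star q' = q' := hq's.symm
  have assoc_ap : ∀ {a b c : A}, a * b = c → ∀ x : A, a * (b * x) = c * x :=
    fun h x => by rw [← mul_assoc, h]
  have hqp : q * p = 0 := by
    have h := congrArg star hpq
    rwa [star_mul, hqs', hps', star_zero] at h
  -- b is positive
  have hxq : q * x * q = b := by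
    have h1 : q * ((t : ℂ) • p) * q = 0 := by
      rw [mul_smul_comm, hqp, smul_zero, zero_mul]
    have h2 : q * b * q = b := by rw [hqb, hbq]
    rw [hx_def, mul_add, add_mul, h1, h2, zero_add]
  have hbnn : (0 : A) ≤ b := by
    have h := star_left_conjugate_nonneg hx_pos q
    rwa [hqs', hxq] at h
  -- partial isometry facts
  have hviso : v * star v * v = v := pcp_partial_isometry hvv hqq
  have hq'v : q' * v = v := by rw [← hvv']; exact hviso
  have hvq : v * q = v := by rw [← hvv, ← mul_assoc]; exact hviso
  have hvq' : star v * q' = star v := by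
    have h := congrArg star hq'v; rwa [star_mul, hq's'] at h
  have hqv' : q * star v = star v := by
    have h := congrArg star hvq; rwa [star_mul, hqs'] at h
  have hqq' : q * q' = 0 := by rw [← hpq', ← mul_assoc, hqp, zero_mul]
  have hqv : q * v = 0 := by rw [← hq'v, ← mul_assoc, hqq', zero_mul]
  have hv'q : star v * q = 0 := by
    have h := congrArg star hqv; rwa [star_mul, hqs', star_zero] at h
  -- square root of b
  have hcnn : (0 : A) ≤ CFC.sqrt b := CFC.sqrt_nonneg b
  have hcs : star (CFC.sqrt b) = CFC.sqrt b := (IsSelfAdjoint.of_nonneg hcnn).star_eq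
  have hcc : CFC.sqrt b * CFC.sqrt b = b := CFC.sqrt_mul_sqrt_self b hbnn
  set c : A := CFC.sqrt b with hc_def
  clear_value c
  obtain ⟨hcq, hqc⟩ := pcp_corner_absorb hqs' hcs hcc hqb hbq
  have hcv : c * v = 0 := by rw [← hcq, mul_assoc, hqv, mul_zero]
  have hv'c : star v * c = 0 := by rw [← hqc, ← mul_assoc, hv'q, zero_mul]
  -- corner inverse square root
  obtain ⟨k, hks, hqk, hkq, hkb, hkmain⟩ := pcp_corner_inv_sqrt hqs' hqq hbnn hqb hbq ht
  have hkkb : k * k * b = b * (k * k) := by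
    rw [mul_assoc, hkb, ← mul_assoc, hkb, mul_assoc]
  -- the element y in the corner q'
  have hq'nn : (0 : A) ≤ q' := by
    have h : q' = star q' * q' := by rw [hq's']; exact hq'q'.symm
    rw [h]; exact star_mul_self_nonneg q'
  set y : A := t • q' + v * b * star v with hy_def
  have hynn : (0 : A) ≤ y := by
    rw [hy_def]
    exact add_nonneg (smul_nonneg ht.le hq'nn) (star_right_conjugate_nonneg hbnn v)
  have hyq' : y = q' * y * q' := by
    rw [hy_def]
    simp only [mul_add, add_mul, mul_smul_comm, smul_mul_assoc, mul_assoc, hq'q',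
      assoc_ap hq'q', assoc_ap hq'v, hvq']
  have hKcr : k * (t • q + b) * k = q := by
    have h1 : k * (t • q) * k = t • (k * k) := by
      rw [mul_smul_comm, smul_mul_assoc, hkq]
    have h2 : k * b * k = b * (k * k) := by rw [hkb, mul_assoc]
    rw [mul_add, add_mul, h1, h2, hkmain]
  have hyinv : ∃ cy : A, cy = q' * cy * q' ∧ y * cy = q' ∧ cy * y = q' := by
    refine ⟨v * (k * k) * star v, ?_, ?_, ?_⟩
    · simp only [mul_assoc, assoc_ap hq'v, hvq']
    · rw [hy_def, add_mul]
      have h1 : (t • q' : A) * (v * (k * k) * star v) = v * (t • (k * k)) * star v := by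
        simp only [smul_mul_assoc, mul_assoc, assoc_ap hq'v, mul_smul_comm]
      have h2 : (v * b * star v) * (v * (k * k) * star v) = v * (b * (k * k)) * star v := by
        simp only [mul_assoc, assoc_ap hvv, assoc_ap hqk]
      rw [h1, h2, ← add_mul, ← mul_add, hkmain, mul_assoc, hqv', hvv']
    · rw [hy_def, mul_add]
      have h1 : (v * (k * k) * star v) * (t • q') = v * (t • (k * k)) * star v := by
        simp only [smul_mul_assoc, mul_assoc, mul_smul_comm, hvq']
      have h2 : (v * (k * k) * star v) * (v * b * star v) = v * (b * (k * k)) * star v := by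
        simp only [mul_assoc, assoc_ap hvv, assoc_ap hqb, ← hkkb]
      rw [h1, h2, ← add_mul, ← mul_add, hkmain, mul_assoc, hqv', hvv']
  obtain ⟨n, T, E, hTpos, hE, hyE⟩ :=
    hcorner q' ⟨hq's, hq'q'⟩ ⟨hq'p, hpq'⟩ y hynn hyq' hyinv
  have hEstar : ∀ j, star (E j) = E j := fun j => ((hE j).1).symm
  have hEe : ∀ j, E j * E j = E j := fun j => (hE j).2.1
  have hEq' : ∀ j, E j = q' * E j * q' := fun j => (hE j).2.2
  have hq'Ej : ∀ j, q' * E j = E j := by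
    intro j
    nth_rewrite 1 [hEq' j]
    rw [← mul_assoc, ← mul_assoc, hq'q', ← hEq' j]
  have hEjq' : ∀ j, E j * q' = E j := by
    intro j
    nth_rewrite 1 [hEq' j]
    rw [mul_assoc, mul_assoc, hq'q', ← mul_assoc, ← hEq' j]
  -- the elements m and m'
  set a : ℂ := ((Real.sqrt t : ℝ) : ℂ) with ha_def
  have has : star a = a := by rw [ha_def, Complex.star_def, Complex.conj_ofReal]
  have haa : a * a = (t : ℂ) := by
    rw [ha_def, ← Complex.ofReal_mul, Real.mul_self_sqrt ht.le]
  set m : A := a • v + c with hm_def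
  set m' : A := a • v - c with hm'_def
  have hsm : star m = a • star v + c := by
    rw [hm_def, star_add, star_smul, has, hcs]
  have hsm' : star m' = a • star v - c := by
    rw [hm'_def, star_sub, star_smul, has, hcs]
  clear_value m m'
  have hmm_id : star m * m = (t : ℂ) • q + b := by
    rw [hsm, hm_def, add_mul, mul_add, mul_add, smul_mul_smul_comm, hvv, haa,
      smul_mul_assoc, hv'c, smul_zero, mul_smul_comm, hcv, smul_zero, hcc, add_zero, zero_add]
  have hm'm'_id : star m' * m' = (t : ℂ) • q + b := by
    rw [hsm', hm'_def, sub_mul, mul_sub, mul_sub, smul_mul_smul_comm, hvv, haa,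
      smul_mul_assoc, hv'c, smul_zero, mul_smul_comm, hcv, smul_zero, hcc, sub_zero, zero_sub,
      sub_neg_eq_add]
  have hKc : k * ((t : ℂ) • q + b) * k = q := by
    rw [Complex.coe_smul]
    exact hKcr
  have hmq : m * q = m := by rw [hm_def, add_mul, smul_mul_assoc, hvq, hcq]
  have hm'q : m' * q = m' := by rw [hm'_def, sub_mul, smul_mul_assoc, hvq, hcq]
  have hqsm : q * star m = star m := by rw [hsm, mul_add, mul_smul_comm, hqv', hqc]
  have hqsm' : q * star m' = star m' := by rw [hsm', mul_sub, mul_smul_comm, hqv', hqc]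
  -- middle reduction
  have hmid : ∀ X : A, k * (star m * (m * (k * X))) = q * X := by
    intro X
    calc k * (star m * (m * (k * X))) = (k * (star m * m) * k) * X := by
          simp only [mul_assoc]
      _ = q * X := by rw [hmm_id, hKc]
  have hmid' : ∀ X : A, k * (star m' * (m' * (k * X))) = q * X := by
    intro X
    calc k * (star m' * (m' * (k * X))) = (k * (star m' * m') * k) * X := by
          simp only [mul_assoc]
      _ = q * X := by rw [hm'm'_id, hKc]
  -- projection properties of the building blocks
  have hfstar : ∀ j, star (m * k * (star v * E j * v) * (k * star m))
      = m * k * (star v * E j * v) * (k * star m) := by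
    intro j
    simp only [star_mul, star_star, hks, hEstar, mul_assoc]
  have hfstar' : ∀ j, star (m' * k * (star v * E j * v) * (k * star m'))
      = m' * k * (star v * E j * v) * (k * star m') := by
    intro j
    simp only [star_mul, star_star, hks, hEstar, mul_assoc]
  have hproj : ∀ j, (m * k * (star v * E j * v) * (k * star m))
      * (m * k * (star v * E j * v) * (k * star m))
      = m * k * (star v * E j * v) * (k * star m) := by
    intro j
    simp only [mul_assoc]
    rw [hmid]
    simp only [assoc_ap hqv', assoc_ap hvv', assoc_ap (hq'Ej j), assoc_ap (hEe j)]
  have hproj' : ∀ j, (m' * k * (star v * E j * v) * (k * star m'))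
      * (m' * k * (star v * E j * v) * (k * star m'))
      = m' * k * (star v * E j * v) * (k * star m') := by
    intro j
    simp only [mul_assoc]
    rw [hmid']
    simp only [assoc_ap hqv', assoc_ap hvv', assoc_ap (hq'Ej j), assoc_ap (hEe j)]
  -- the weighted sums give m * star m and m' * star m'
  have hsvyv : star v * y * v = (t : ℂ) • q + b := by
    have e1 : star v * (t • q') * v = (t : ℂ) • q := by
      rw [mul_smul_comm, smul_mul_assoc, hvq', hvv, ← Complex.coe_smul]
    have e2 : star v * (v * b * star v) * v = b := by
      simp only [mul_assoc, assoc_ap hvv, assoc_ap hqb, hvv, hbq, hqb]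
    rw [hy_def, mul_add, add_mul, e1, e2]
  have hyred : ∀ X : A, k * ((star v * y * v) * (k * X)) = q * X := by
    intro X
    calc k * ((star v * y * v) * (k * X)) = (k * (star v * y * v) * k) * X := by
          simp only [mul_assoc]
      _ = q * X := by rw [hsvyv, hKc]
  have hsumf : ∑ j, (T j : ℂ) • (m * k * (star v * E j * v) * (k * star m))
      = m * star m := by
    have h1 : ∀ j, (T j : ℂ) • (m * k * (star v * E j * v) * (k * star m))
        = (m * k * star v) * ((T j : ℂ) • E j) * (v * (k * star m)) := by
      intro j
      simp only [mul_assoc, smul_mul_assoc, mul_smul_comm]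
    rw [Finset.sum_congr rfl (fun j _ => h1 j), ← Finset.sum_mul, ← Finset.mul_sum, ← hyE]
    calc m * k * star v * y * (v * (k * star m))
        = m * (k * ((star v * y * v) * (k * star m))) := by simp only [mul_assoc]
      _ = m * (q * star m) := by rw [hyred]
      _ = m * star m := by rw [hqsm]
  have hsumf' : ∑ j, (T j : ℂ) • (m' * k * (star v * E j * v) * (k * star m'))
      = m' * star m' := by
    have h1 : ∀ j, (T j : ℂ) • (m' * k * (star v * E j * v) * (k * star m'))
        = (m' * k * star v) * ((T j : ℂ) • E j) * (v * (k * star m')) := by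
      intro j
      simp only [mul_assoc, smul_mul_assoc, mul_smul_comm]
    rw [Finset.sum_congr rfl (fun j _ => h1 j), ← Finset.sum_mul, ← Finset.mul_sum, ← hyE]
    calc m' * k * star v * y * (v * (k * star m'))
        = m' * (k * ((star v * y * v) * (k * star m'))) := by simp only [mul_assoc]
      _ = m' * (q * star m') := by rw [hyred]
      _ = m' * star m' := by rw [hqsm']
  -- the sum of the two rank pieces
  have hMM : m * star m + m' * star m' = ((t : ℂ) • q' + b) + ((t : ℂ) • q' + b) := by
    rw [hsm, hsm', hm_def, hm'_def]
    simp only [add_mul, mul_add, sub_mul, mul_sub, smul_mul_smul_comm, smul_mul_assoc,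
      mul_smul_comm, hvv', hcc, haa]
    simp only [smul_add, smul_smul, haa]
    match_scalars <;> first | ring1 | linear_combination haa
  -- assemble the final positive combination
  refine ⟨n + n + 1,
    Fin.snoc (Fin.append (fun j => T j / 2) (fun j => T j / 2)) t,
    Fin.snoc (Fin.append (fun j => m * k * (star v * E j * v) * (k * star m))
      (fun j => m' * k * (star v * E j * v) * (k * star m'))) (p - q'), ?_, ?_, ?_⟩
  · intro j
    refine Fin.lastCases ?_ (fun i => ?_) j
    · simp only [Fin.snoc_last]; exact ht
    · simp only [Fin.snoc_castSucc]
      refine Fin.addCases (fun i' => ?_) (fun i' => ?_) i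
      · rw [Fin.append_left]; exact half_pos (hTpos i')
      · rw [Fin.append_right]; exact half_pos (hTpos i')
  · intro j
    refine Fin.lastCases ?_ (fun i => ?_) j
    · simp only [Fin.snoc_last]
      constructor
      · rw [star_sub, hps', hq's']
      · rw [mul_sub, sub_mul, sub_mul, hpp, hpq', hq'p, hq'q', sub_self, sub_zero]
    · simp only [Fin.snoc_castSucc]
      refine Fin.addCases (fun i' => ?_) (fun i' => ?_) i
      · rw [Fin.append_left]; exact ⟨(hfstar i').symm, hproj i'⟩
      · rw [Fin.append_right]; exact ⟨(hfstar' i').symm, hproj' i'⟩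
  · rw [Fin.sum_univ_castSucc]
    simp only [Fin.snoc_castSucc, Fin.snoc_last]
    rw [Fin.sum_univ_add]
    simp only [Fin.append_left, Fin.append_right]
    have hhalf : ∀ (r : ℝ) (w : A), ((r / 2 : ℝ) : ℂ) • w = (1 / 2 : ℂ) • ((r : ℂ) • w) := by
      intro r w
      rw [smul_smul]
      congr 1
      push_cast
      ring
    rw [Finset.sum_congr rfl
      (fun j _ => hhalf (T j) (m * k * (star v * E j * v) * (k * star m)))]
    rw [Finset.sum_congr rfl
      (fun j _ => hhalf (T j) (m' * k * (star v * E j * v) * (k * star m')))]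
    rw [← Finset.smul_sum, ← Finset.smul_sum, hsumf, hsumf']
    rw [← smul_add, hMM]
    have h2 : ((t : ℂ) • q' + b) + ((t : ℂ) • q' + b) = (2 : ℂ) • ((t : ℂ) • q' + b) := by
      rw [two_smul]
    rw [h2, smul_smul]
    norm_num
    rw [hx_def, smul_sub, Complex.coe_smul]
    abel
end
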